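/- (Case R31, converse direction) Let p, q, r ∈ ℂ, let R = diag(1, p, q, r), and let Q = [[a,b],[c,d]] be an invertible 2×2 complex matrix such that (Q ⊗ₖ Q)·R·(Q ⊗ₖ Q)⁻¹ is unitary. Then |p| = |q| = |r| = 1, and if R is not the identity matrix then a·conj(b) + c·conj(d) = 0. -/

import Mathlib

open Matrix Kronecker

/-- Identify `Fin 2 × Fin 2` with `Fin 4` using the basis ordering
`v₀⊗v₀, v₀⊗v₁, v₁⊗v₀, v₁⊗v₁`. -/
def toFin4 : Fin 2 × Fin 2 → Fin 4 := fun p => ⟨2 * p.1.val + p.2.val, by omega⟩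

/-- View an explicit `4 × 4` matrix as a matrix acting on `ℂ² ⊗ ℂ²`. -/
def m44 (M : Matrix (Fin 4) (Fin 4) ℂ) : Matrix (Fin 2 × Fin 2) (Fin 2 × Fin 2) ℂ :=
  M.submatrix toFin4 toFin4

lemma aux_sq_zero (z w : ℂ) (h : (starRingEnd ℂ) z * z + (starRingEnd ℂ) w * w = 0) :
    z = 0 ∧ w = 0 := by
  have h1 : ((Complex.normSq z + Complex.normSq w : ℝ) : ℂ) = 0 := by
    push_cast
    rw [Complex.normSq_eq_conj_mul_self, Complex.normSq_eq_conj_mul_self]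
    exact h
  have h2 : Complex.normSq z + Complex.normSq w = 0 := by exact_mod_cast h1
  have hz : Complex.normSq z = 0 := by
    nlinarith [Complex.normSq_nonneg z, Complex.normSq_nonneg w]
  have hw : Complex.normSq w = 0 := by
    nlinarith [Complex.normSq_nonneg z, Complex.normSq_nonneg w]
  exact ⟨Complex.normSq_eq_zero.mp hz, Complex.normSq_eq_zero.mp hw⟩

lemma aux_abs_one (t z : ℂ) (ht : t ≠ 0) (h : (starRingEnd ℂ) z * t * z = t) :
    ‖z‖ = 1 := by
  have h1 : ((starRingEnd ℂ) z * z - 1) * t = 0 := by linear_combination h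
  rcases mul_eq_zero.mp h1 with h2 | h2
  · have h3 : ((Complex.normSq z : ℝ) : ℂ) = 1 := by
      rw [Complex.normSq_eq_conj_mul_self]
      linear_combination h2
    have h4 : Complex.normSq z = 1 := by exact_mod_cast h3
    rw [Complex.norm_def, h4, Real.sqrt_one]
  · exact absurd h2 ht

theorem caseR31_converse (p q r a b c d : ℂ)
    (hdet : IsUnit (!![a, b; c, d] : Matrix (Fin 2) (Fin 2) ℂ).det)
    (R : Matrix (Fin 2 × Fin 2) (Fin 2 × Fin 2) ℂ)
    (hR : R = m44 !![1, 0, 0, 0; 0, p, 0, 0; 0, 0, q, 0; 0, 0, 0, r])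
    (hU : ((!![a, b; c, d] ⊗ₖ !![a, b; c, d]) * R * (!![a, b; c, d] ⊗ₖ !![a, b; c, d])⁻¹)ᴴ *
      ((!![a, b; c, d] ⊗ₖ !![a, b; c, d]) * R * (!![a, b; c, d] ⊗ₖ !![a, b; c, d])⁻¹) = 1) :
    (‖p‖ = 1 ∧ ‖q‖ = 1 ∧ ‖r‖ = 1) ∧
      (R ≠ 1 → a * (starRingEnd ℂ) b + c * (starRingEnd ℂ) d = 0) := by
  have hdet' : a * d - b * c ≠ 0 := by
    have h := hdet
    rw [Matrix.det_fin_two_of, isUnit_iff_ne_zero] at h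
    exact h
  set Q : Matrix (Fin 2) (Fin 2) ℂ := !![a, b; c, d] with hQ
  set K := Q ⊗ₖ Q with hKdef
  set f : Fin 2 × Fin 2 → ℂ := fun x => !![1, p; q, r] x.1 x.2 with hf
  have hRd : R = Matrix.diagonal f := by
    subst hR
    ext ⟨i, j⟩ ⟨k, l⟩
    fin_cases i <;> fin_cases j <;> fin_cases k <;> fin_cases l <;>
      simp [m44, toFin4, Matrix.diagonal, Matrix.vecHead, Matrix.vecTail, Prod.ext_iff, hf]
  have hKdet : IsUnit K.det := by
    rw [hKdef, Matrix.det_kronecker]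
    exact (hdet.pow _).mul (hdet.pow _)
  have hG : Rᴴ * (Kᴴ * K) * R = Kᴴ * K := by
    have h := congrArg (fun M => Kᴴ * M * K) hU
    simp only [Matrix.conjTranspose_mul, Matrix.conjTranspose_nonsing_inv] at h
    have hKHdet : IsUnit Kᴴ.det := by rw [Matrix.det_conjTranspose]; exact hKdet.star
    have e1 : Kᴴ * (Kᴴ)⁻¹ = 1 := Matrix.mul_nonsing_inv _ hKHdet
    have e2 : K⁻¹ * K = 1 := Matrix.nonsing_inv_mul _ hKdet
    simp only [Matrix.mul_assoc, e2, Matrix.mul_one] at h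
    simp only [← Matrix.mul_assoc, e1, Matrix.one_mul] at h
    simpa [Matrix.mul_assoc] using h
  have key : ∀ x y : Fin 2 × Fin 2,
      (starRingEnd ℂ) (f x) * ((Kᴴ * K) x y) * f y = (Kᴴ * K) x y := by
    intro x y
    have h := congrFun (congrFun hG x) y
    simpa [hRd, Matrix.diagonal_conjTranspose, Matrix.diagonal_mul, Matrix.mul_diagonal,
      mul_comm, mul_left_comm, mul_assoc] using h
  set H00 : ℂ := (starRingEnd ℂ) a * a + (starRingEnd ℂ) c * c with hH00def
  set H01 : ℂ := (starRingEnd ℂ) a * b + (starRingEnd ℂ) c * d with hH01def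
  set H11 : ℂ := (starRingEnd ℂ) b * b + (starRingEnd ℂ) d * d with hH11def
  have gram : ∀ x y : Fin 2 × Fin 2, (Kᴴ * K) x y =
      ((starRingEnd ℂ) (Q 0 x.1) * Q 0 y.1 + (starRingEnd ℂ) (Q 1 x.1) * Q 1 y.1) *
      ((starRingEnd ℂ) (Q 0 x.2) * Q 0 y.2 + (starRingEnd ℂ) (Q 1 x.2) * Q 1 y.2) := by
    intro x y
    simp [hKdef, Matrix.mul_apply, Fintype.sum_prod_type, Fin.sum_univ_succ,
      Matrix.conjTranspose_apply, Matrix.kroneckerMap_apply]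
    ring
  have hH00 : H00 ≠ 0 := by
    intro h
    obtain ⟨ha, hc⟩ := aux_sq_zero a c h
    exact hdet' (by rw [ha, hc]; ring)
  have hH11 : H11 ≠ 0 := by
    intro h
    obtain ⟨hb, hd⟩ := aux_sq_zero b d h
    exact hdet' (by rw [hb, hd]; ring)
  -- eigenvalue modulus facts
  have ep := key (0, 1) (0, 1)
  have eq' := key (1, 0) (1, 0)
  have er := key (1, 1) (1, 1)
  rw [gram] at ep eq' er
  simp only [hf, hQ] at ep eq' er
  norm_num [Matrix.cons_val_zero, Matrix.cons_val_one, Matrix.head_cons] at ep eq' er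
  have habsp : ‖p‖ = 1 := by
    apply aux_abs_one (H00 * H11) p (mul_ne_zero hH00 hH11)
    rw [hH00def, hH11def]; linear_combination ep
  have habsq : ‖q‖ = 1 := by
    apply aux_abs_one (H11 * H00) q (mul_ne_zero hH11 hH00)
    rw [hH00def, hH11def]; linear_combination eq'
  have habsr : ‖r‖ = 1 := by
    apply aux_abs_one (H11 * H11) r (mul_ne_zero hH11 hH11)
    rw [hH11def]; linear_combination er
  refine ⟨⟨habsp, habsq, habsr⟩, ?_⟩
  intro hRne
  have hne : ¬(p = 1 ∧ q = 1 ∧ r = 1) := by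
    rintro ⟨hp, hq, hr⟩
    apply hRne
    rw [hRd]
    have : f = fun _ => 1 := by
      funext ⟨i, j⟩
      fin_cases i <;> fin_cases j <;> simp [hf, hp, hq, hr]
    rw [this]
    exact Matrix.diagonal_one
  have hH01zero : H01 = 0 := by
    by_cases hp : p = 1
    · by_cases hq : q = 1
      · have hr : r ≠ 1 := fun hr => hne ⟨hp, hq, hr⟩
        have e := key (0, 0) (1, 1)
        rw [gram] at e
        simp only [hf, hQ] at e
        norm_num [Matrix.cons_val_zero, Matrix.cons_val_one, Matrix.head_cons] at e
        have h1 : (r - 1) * (H01 * H01) = 0 := by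
          rw [hH01def]; linear_combination e
        rcases mul_eq_zero.mp h1 with h2 | h2
        · exact absurd (by linear_combination h2) hr
        · exact mul_self_eq_zero.mp h2
      · have e := key (0, 0) (1, 0)
        rw [gram] at e
        simp only [hf, hQ] at e
        norm_num [Matrix.cons_val_zero, Matrix.cons_val_one, Matrix.head_cons] at e
        have h1 : (q - 1) * (H01 * H00) = 0 := by
          rw [hH01def, hH00def]; linear_combination e
        rcases mul_eq_zero.mp h1 with h2 | h2
        · exact absurd (by linear_combination h2) hq
        · rcases mul_eq_zero.mp h2 with h3 | h3
          · exact h3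
          · exact absurd h3 hH00
    · have e := key (0, 0) (0, 1)
      rw [gram] at e
      simp only [hf, hQ] at e
      norm_num [Matrix.cons_val_zero, Matrix.cons_val_one, Matrix.head_cons] at e
      have h1 : (p - 1) * (H00 * H01) = 0 := by
        rw [hH01def, hH00def]; linear_combination e
      rcases mul_eq_zero.mp h1 with h2 | h2
      · exact absurd (by linear_combination h2) hp
      · rcases mul_eq_zero.mp h2 with h3 | h3
        · exact absurd h3 hH00
        · exact h3
  have := congrArg (starRingEnd ℂ) hH01zero
  rw [hH01def] at this
  simpa [mul_comm] using this
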